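/- arXiv:2412.13269 — 5 statements merged into one kernel-verified Lean document; each statement's English description precedes it below -/
import Mathlib

section
/- Let N ≥ 2 be a power of two and Q an odd positive integer, so that N is invertible in ZMod Q. Let m_0, …, m_{N−1} be elements of R = (ZMod Q)[X]/(X^N + 1). Define c_j^{(0)} = N^{−1}·m_j for 0 ≤ j < N, and for each step i = 0, 1, …, log₂N − 1 set t = N/2^{i+1}, let g = 2N − 1 if i = 0 and g = 5^{2^{i−1}} mod 2N otherwise, and define c_j^{(i+1)} = c_j^{(i)} + X^t·c_{j+t}^{(i)} + φ_g(c_j^{(i)} − X^t·c_{j+t}^{(i)}) for 0 ≤ j < t. Then the final element satisfies c_0^{(log₂N)} = Σ_{i=0}^{N−1} m_i[0]·X^i, where m_i[0] is the constant coefficient of the degree-<N representative of m_i. -/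
open Polynomial AdjoinRoot

noncomputable section

/-- The negacyclic ring `(ZMod Q)[X]/(X^N + 1)`. -/
abbrev Rq (Q N : ℕ) := AdjoinRoot (X ^ N + 1 : (ZMod Q)[X])

lemma monicXN (Q N : ℕ) (hN : 0 < N) : (X ^ N + 1 : (ZMod Q)[X]).Monic :=
  Polynomial.monic_X_pow_add (lt_of_le_of_lt Polynomial.degree_one_le (by exact_mod_cast hN))

/-- The `k`-th coefficient of the unique degree `< N` representative of `m`. -/
def coeffOf {Q N : ℕ} (hN : 0 < N) (m : Rq Q N) (k : ℕ) : ZMod Q :=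
  ((AdjoinRoot.modByMonicHom (monicXN Q N hN)) m).coeff k

lemma root_pow_eq_neg_one (Q N : ℕ) :
    (root (X ^ N + 1 : (ZMod Q)[X])) ^ N = -1 := by
  have h : (Polynomial.aeval (root (X ^ N + 1 : (ZMod Q)[X]))) (X ^ N + 1 : (ZMod Q)[X]) = 0 := by
    rw [AdjoinRoot.aeval_eq, AdjoinRoot.mk_self]
  simp only [map_add, map_pow, Polynomial.aeval_X, map_one] at h
  linear_combination h

lemma aeval_root_pow_odd (Q N : ℕ) {g : ℕ} (hg : Odd g) :
    (Polynomial.aeval ((root (X ^ N + 1 : (ZMod Q)[X])) ^ g)) (X ^ N + 1 : (ZMod Q)[X]) = 0 := by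
  have h : ((root (X ^ N + 1 : (ZMod Q)[X])) ^ g) ^ N = -1 := by
    rw [← pow_mul, mul_comm, pow_mul, root_pow_eq_neg_one, Odd.neg_one_pow hg]
  simp only [map_add, map_pow, Polynomial.aeval_X, map_one, h]
  ring

/-- The automorphism `φ_g : X ↦ X^g` of `(ZMod Q)[X]/(X^N+1)`, for `g` odd. -/
def phi (Q N : ℕ) (g : ℕ) (hg : Odd g) : Rq Q N →ₐ[ZMod Q] Rq Q N :=
  AdjoinRoot.liftAlgHom _ (Algebra.ofId _ _) ((root (X ^ N + 1 : (ZMod Q)[X])) ^ g) (aeval_root_pow_odd Q N hg)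

end

lemma odd_repack_exponent (N i : ℕ) (hN : 0 < N) :
    Odd (if i = 0 then 2 * N - 1 else 5 ^ 2 ^ (i - 1) % (2 * N)) := by
  split
  · exact ⟨N - 1, by omega⟩
  · rw [Nat.odd_iff, Nat.mod_mod_of_dvd _ ⟨N, rfl⟩, Nat.pow_mod]; norm_num

----------------- NEW AUX -------------------

noncomputable section RepackAux

open Finset

variable (Q N : ℕ)

local notation "ζ" => root (X ^ N + 1 : (ZMod Q)[X])

lemma zeta_pow_add_N_mul_odd (x : ℕ) {d : ℕ} (hd : Odd d) :
    ζ ^ (x + N * d) = - ζ ^ x := by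
  rw [pow_add, pow_mul, root_pow_eq_neg_one, hd.neg_one_pow]
  ring

lemma zeta_pow_add_two_N_mul (x d : ℕ) : ζ ^ (x + 2 * N * d) = ζ ^ x := by
  have : 2 * N * d = N * (2 * d) := by ring
  rw [this, pow_add, pow_mul, root_pow_eq_neg_one]
  simp [pow_mul]

lemma zeta_modeq {a b : ℕ} (h : a ≡ b [MOD 2 * N]) : ζ ^ a = ζ ^ b := by
  have ha : ζ ^ a = ζ ^ (a % (2 * N)) := by
    conv_lhs => rw [(Nat.mod_add_div a (2*N)).symm]
    rw [zeta_pow_add_two_N_mul]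
  have hb : ζ ^ b = ζ ^ (b % (2 * N)) := by
    conv_lhs => rw [(Nat.mod_add_div b (2*N)).symm]
    rw [zeta_pow_add_two_N_mul]
  rw [ha, hb, h]

lemma phi_zeta_pow (g : ℕ) (hg : Odd g) (x : ℕ) :
    phi Q N g hg (ζ ^ x) = ζ ^ (g * x) := by
  rw [map_pow, pow_mul]
  congr 1
  exact AdjoinRoot.liftAlgHom_root _ _ _ _

/-- the iterated partial-trace operator -/
def Emap (hN : 0 < N) : ℕ → (Rq Q N →ₗ[ZMod Q] Rq Q N)
  | 0 => LinearMap.id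
  | (i+1) => Emap hN i +
      (phi Q N (if i = 0 then 2 * N - 1 else 5 ^ 2 ^ (i - 1) % (2 * N))
        (odd_repack_exponent N i hN)).toLinearMap ∘ₗ Emap hN i

lemma Emap_succ (hN : 0 < N) (i : ℕ) (x : Rq Q N) :
    Emap Q N hN (i+1) x = Emap Q N hN i x +
      (phi Q N (if i = 0 then 2 * N - 1 else 5 ^ 2 ^ (i - 1) % (2 * N))
        (odd_repack_exponent N i hN)) (Emap Q N hN i x) := rfl

end RepackAux

section Helpers
open Finset

-- LTE for 5 mod powers of 2
lemma five_pow_two_pow (m : ℕ) : ∃ c, Odd c ∧ 5 ^ 2 ^ m = 1 + 2 ^ (m + 2) * c := by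
  induction m with
  | zero => exact ⟨1, odd_one, by norm_num⟩
  | succ m ih =>
    obtain ⟨c, hc, h⟩ := ih
    refine ⟨c + 2 ^ (m + 1) * c ^ 2, ?_, ?_⟩
    · rcases hc with ⟨w, rfl⟩; exact ⟨w + 2^m * (2*w+1)^2, by ring⟩
    · have : 5 ^ 2 ^ (m + 1) = (5 ^ 2 ^ m) ^ 2 := by
        rw [← pow_mul, pow_succ]
      rw [this, h]; ring

lemma sum_antiperiodic_eq_zero {R : Type*} [AddCommGroup R] (f : ℕ → R) (h : ℕ)
    (hf : ∀ e, f (e + h) = - f e) (M : ℕ) : ∑ e ∈ range (2 * h * M), f e = 0 := by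
  induction M with
  | zero => simp
  | succ M ih =>
    have : 2 * h * (M + 1) = 2 * h * M + (h + h) := by ring
    rw [this, Finset.sum_range_add, ih, zero_add, Finset.sum_range_add, ← Finset.sum_add_distrib]
    refine Finset.sum_eq_zero fun r _ => ?_
    rw [show 2 * h * M + (h + r) = (2 * h * M + r) + h by omega, hf]
    exact add_neg_cancel _

lemma sum_range_even_odd {R : Type*} [AddCommMonoid R] (f : ℕ → R) (n : ℕ) :
    ∑ s ∈ range (2 * n), f s = ∑ s ∈ range n, f (2 * s) + ∑ s ∈ range n, f (2 * s + 1) := by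
  induction n with
  | zero => simp
  | succ n ih =>
    rw [show 2 * (n+1) = (2*n) + 1 + 1 by ring, Finset.sum_range_succ, Finset.sum_range_succ,
      ih, Finset.sum_range_succ, Finset.sum_range_succ]
    abel

end Helpers

noncomputable section RepackAux2

open Finset

variable (Q N : ℕ)

local notation "ζ" => root (X ^ N + 1 : (ZMod Q)[X])

lemma Emap_succ_zeta (hN : 0 < N) (a i : ℕ) :
    Emap Q N hN (i + 1) (ζ ^ a) =
      ∑ e ∈ range (2 ^ i), (ζ ^ (5 ^ e * a) + ζ ^ ((2 * N - 1) * (5 ^ e * a))) := by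
  induction i with
  | zero =>
    rw [Emap_succ]
    simp only [Emap, LinearMap.id_apply, if_pos rfl]
    rw [phi_zeta_pow]
    simp
  | succ i ih =>
    rw [Emap_succ, ih]
    simp only [map_sum]
    have hg : (if i + 1 = 0 then 2 * N - 1 else 5 ^ 2 ^ (i + 1 - 1) % (2 * N))
        = 5 ^ 2 ^ i % (2 * N) := by simp
    have hmod : (5 ^ 2 ^ i % (2 * N)) ≡ 5 ^ 2 ^ i [MOD 2 * N] := Nat.mod_modEq _ _
    have hterm : ∀ e : ℕ,
        (phi Q N _ (odd_repack_exponent N (i+1) hN))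
            (ζ ^ (5 ^ e * a) + ζ ^ ((2 * N - 1) * (5 ^ e * a)))
          = ζ ^ (5 ^ (2 ^ i + e) * a) + ζ ^ ((2 * N - 1) * (5 ^ (2 ^ i + e) * a)) := by
      intro e
      rw [map_add, phi_zeta_pow, phi_zeta_pow]
      congr 1
      · refine zeta_modeq Q N ?_
        calc (if i + 1 = 0 then 2 * N - 1 else 5 ^ 2 ^ (i + 1 - 1) % (2 * N)) * (5 ^ e * a)
            = (5 ^ 2 ^ i % (2 * N)) * (5 ^ e * a) := by rw [hg]
          _ ≡ 5 ^ 2 ^ i * (5 ^ e * a) [MOD 2 * N] := hmod.mul_right _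
          _ = 5 ^ (2 ^ i + e) * a := by rw [pow_add]; ring
      · refine zeta_modeq Q N ?_
        calc (if i + 1 = 0 then 2 * N - 1 else 5 ^ 2 ^ (i + 1 - 1) % (2 * N))
              * ((2 * N - 1) * (5 ^ e * a))
            = (5 ^ 2 ^ i % (2 * N)) * ((2 * N - 1) * (5 ^ e * a)) := by rw [hg]
          _ ≡ 5 ^ 2 ^ i * ((2 * N - 1) * (5 ^ e * a)) [MOD 2 * N] := hmod.mul_right _
          _ = (2 * N - 1) * (5 ^ (2 ^ i + e) * a) := by rw [pow_add]; ring
    rw [show (2:ℕ) ^ (i + 1) = 2 ^ i + 2 ^ i by ring, Finset.sum_range_add]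
    congr 1
    exact Finset.sum_congr rfl fun e _ => hterm e

lemma Emap_one (hN : 0 < N) (i : ℕ) :
    Emap Q N hN i (1 : Rq Q N) = (2 ^ i : ℕ) • (1 : Rq Q N) := by
  induction i with
  | zero => simp [Emap]
  | succ i ih =>
    rw [Emap_succ, ih, map_nsmul, map_one]
    rw [show (2:ℕ) ^ (i+1) = 2 ^ i + 2 ^ i by ring, add_smul]

lemma odd_two_pow_sub_one {k : ℕ} (hk : 1 ≤ k) : Odd (2 ^ k - 1) := by
  obtain ⟨w, hw⟩ : 2 ∣ 2 ^ k := dvd_pow_self 2 (by omega)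
  have : 1 ≤ 2 ^ k := Nat.one_le_two_pow
  rw [Nat.odd_iff]; omega

lemma Emap_zeta_eq_zero {k : ℕ} (hk : 1 ≤ k) (hNk : N = 2 ^ k) (hN : 0 < N)
    {a : ℕ} (ha0 : 0 < a) (haN : a < N) : Emap Q N hN k (ζ ^ a) = 0 := by
  obtain ⟨v, u, hu, rfl⟩ := Nat.exists_eq_two_pow_mul_odd ha0.ne'
  have hvk : v < k := by
    by_contra hcon
    push_neg at hcon
    have h1 : 2 ^ k ≤ 2 ^ v := Nat.pow_le_pow_right (by norm_num) hcon
    have h2 : 1 ≤ u := hu.pos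
    nlinarith [hNk ▸ haN]
  have hNodd : Odd (N - 1) := hNk ▸ odd_two_pow_sub_one hk
  have h5odd : ∀ e : ℕ, Odd ((5:ℕ) ^ e) := fun e => Odd.pow ⟨2, rfl⟩
  have h2Nodd : Odd (2 * N - 1) := ⟨N - 1, by omega⟩
  rw [show k = (k - 1) + 1 by omega, Emap_succ_zeta]
  by_cases hv : v = k - 1
  · refine Finset.sum_eq_zero fun e _ => ?_
    have key : (2 * N - 1) * (5 ^ e * (2 ^ v * u))
        = 5 ^ e * (2 ^ v * u) + N * ((N - 1) * (5 ^ e * u)) := by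
      subst hv
      have hN2 : N = 2 * 2 ^ (k - 1) := by rw [hNk, ← pow_succ']; congr 1; omega
      zify [show 1 ≤ 2 * N by omega, show 1 ≤ N by omega]
      rw [hN2]; push_cast; ring
    rw [key, zeta_pow_add_N_mul_odd Q N _ (hNodd.mul ((h5odd e).mul hu))]
    exact add_neg_cancel _
  · have hv2 : v + 2 ≤ k := by omega
    obtain ⟨c, hc, h5⟩ := five_pow_two_pow (k - 2 - v)
    have h5' : (5:ℕ) ^ 2 ^ (k - 2 - v) = 1 + 2 ^ (k - v) * c := by
      have hexp : k - 2 - v + 2 = k - v := by omega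
      rw [h5, hexp]
    set h := 2 ^ (k - 2 - v) with hh
    have hBN : (2:ℕ) ^ (k - v) * 2 ^ v = N := by
      rw [hNk, ← pow_add]; congr 1; omega
    have hkey : ∀ e : ℕ, 5 ^ (e + h) * (2 ^ v * u)
        = 5 ^ e * (2 ^ v * u) + N * (5 ^ e * (c * u)) := by
      intro e
      have hsplit : (5:ℕ) ^ (e + h) = 5 ^ e * (1 + 2 ^ (k - v) * c) := by
        rw [pow_add, h5']
      rw [hsplit, ← hBN]; ring
    have hflip : ∀ e : ℕ,
        (ζ ^ (5 ^ (e + h) * (2 ^ v * u)) + ζ ^ ((2 * N - 1) * (5 ^ (e + h) * (2 ^ v * u))))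
        = -(ζ ^ (5 ^ e * (2 ^ v * u)) + ζ ^ ((2 * N - 1) * (5 ^ e * (2 ^ v * u)))) := by
      intro e
      have hd : Odd (5 ^ e * (c * u)) := (h5odd e).mul (hc.mul hu)
      have k2 : (2 * N - 1) * (5 ^ (e + h) * (2 ^ v * u))
          = (2 * N - 1) * (5 ^ e * (2 ^ v * u)) + N * ((2 * N - 1) * (5 ^ e * (c * u))) := by
        rw [hkey e]; ring
      rw [k2, hkey e, zeta_pow_add_N_mul_odd Q N _ hd,
        zeta_pow_add_N_mul_odd Q N _ (h2Nodd.mul hd)]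
      ring
    have hsz : (2:ℕ) ^ (k - 1) = 2 * h * 2 ^ v := by
      rw [hh, ← pow_succ', ← pow_add]; congr 1; omega
    rw [hsz]
    exact sum_antiperiodic_eq_zero _ h hflip (2 ^ v)

end RepackAux2

noncomputable section RepackAux3

open Finset

variable (Q N : ℕ)

local notation "ζ" => root (X ^ N + 1 : (ZMod Q)[X])

lemma G_decomp {N k : ℕ} (hNk : N = 2 ^ k) (hk : 1 ≤ k) (i : ℕ) :
    ∃ c G : ℕ, Odd c ∧ G = 1 + 2 ^ (i + 1) * c ∧
      (if i = 0 then 2 * N - 1 else 5 ^ 2 ^ (i - 1) % (2 * N)) ≡ G [MOD 2 * N] := by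
  rcases Nat.eq_zero_or_pos i with rfl | hi
  · have hN1 : 1 ≤ N := by rw [hNk]; exact Nat.one_le_two_pow
    refine ⟨N - 1, 2 * N - 1, hNk ▸ odd_two_pow_sub_one hk, by simp; omega, by simp [Nat.ModEq.refl]⟩
  · obtain ⟨c, hc, h5⟩ := five_pow_two_pow (i - 1)
    have hexp : i - 1 + 2 = i + 1 := by omega
    refine ⟨c, 5 ^ 2 ^ (i - 1), hc, by rw [h5, hexp], ?_⟩
    simp only [if_neg (by omega : ¬ i = 0)]
    exact Nat.mod_modEq _ _

lemma phi_g_zeta_even {k : ℕ} (hNk : N = 2 ^ k) (hk : 1 ≤ k) {i : ℕ} (hik : i < k)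
    (hg : Odd (if i = 0 then 2 * N - 1 else 5 ^ 2 ^ (i - 1) % (2 * N))) (s : ℕ) :
    phi Q N _ hg (ζ ^ (2 ^ (k - i) * s)) = ζ ^ (2 ^ (k - i) * s) := by
  obtain ⟨c, G, hc, hG, hcong⟩ := G_decomp hNk hk i
  rw [phi_zeta_pow, zeta_modeq Q N (hcong.mul_right _)]
  have hBB : (2:ℕ) ^ (i + 1) * 2 ^ (k - i) = 2 * N := by
    rw [hNk, ← pow_add, ← pow_succ']; congr 1; omega
  have hGx : G * (2 ^ (k - i) * s) = 2 ^ (k - i) * s + 2 * N * (c * s) := by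
    rw [hG, ← hBB]; ring
  rw [hGx, zeta_pow_add_two_N_mul]

lemma phi_g_zeta_odd {k : ℕ} (hNk : N = 2 ^ k) (hk : 1 ≤ k) {i : ℕ} (hik : i < k)
    (hg : Odd (if i = 0 then 2 * N - 1 else 5 ^ 2 ^ (i - 1) % (2 * N)))
    {d : ℕ} (hd : Odd d) :
    phi Q N _ hg (ζ ^ (2 ^ (k - i - 1) * d)) = - ζ ^ (2 ^ (k - i - 1) * d) := by
  obtain ⟨c, G, hc, hG, hcong⟩ := G_decomp hNk hk i
  rw [phi_zeta_pow, zeta_modeq Q N (hcong.mul_right _)]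
  have hBB : (2:ℕ) ^ (i + 1) * 2 ^ (k - i - 1) = N := by
    rw [hNk, ← pow_add]; congr 1; omega
  have hGx : G * (2 ^ (k - i - 1) * d) = 2 ^ (k - i - 1) * d + N * (c * d) := by
    rw [hG, ← hBB]; ring
  rw [hGx, zeta_pow_add_N_mul_odd Q N _ (hc.mul hd)]

lemma decomp (hN : 0 < N) [Nontrivial (ZMod Q)] (x : Rq Q N) :
    x = ∑ a ∈ range N, (coeffOf hN x a) • ζ ^ a := by
  have hdl : ((AdjoinRoot.modByMonicHom (monicXN Q N hN)) x).natDegree < N := by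
    obtain ⟨p, rfl⟩ := AdjoinRoot.mk_surjective x
    rw [AdjoinRoot.modByMonicHom_mk]
    by_cases h0 : p %ₘ (X ^ N + 1 : (ZMod Q)[X]) = 0
    · rw [h0]; simpa using hN
    · have hd := Polynomial.degree_modByMonic_lt p (monicXN Q N hN)
      have hdeg : (X ^ N + 1 : (ZMod Q)[X]).degree = N := by
        have := Polynomial.degree_X_pow_add_C hN (1 : ZMod Q)
        rwa [map_one] at this
      rw [hdeg] at hd
      exact (Polynomial.natDegree_lt_iff_degree_lt h0).mpr hd
  conv_lhs => rw [← AdjoinRoot.mk_leftInverse (monicXN Q N hN) x]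
  rw [← AdjoinRoot.aeval_eq, Polynomial.aeval_eq_sum_range' hdl]
  rfl

lemma Emap_apply {k : ℕ} (hk : 1 ≤ k) (hNk : N = 2 ^ k) (hN : 0 < N)
    [Nontrivial (ZMod Q)] (x : Rq Q N) :
    Emap Q N hN k x = algebraMap (ZMod Q) (Rq Q N) ((N : ZMod Q) * coeffOf hN x 0) := by
  conv_lhs => rw [decomp Q N hN x]
  rw [map_sum, Finset.sum_eq_single_of_mem 0 (mem_range.mpr hN)]
  · rw [map_smul, pow_zero, Emap_one]
    rw [Algebra.algebraMap_eq_smul_one, ← Nat.cast_smul_eq_nsmul (ZMod Q), smul_smul]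
    congr 1
    subst hNk; push_cast; ring
  · intro a ha hane
    rw [map_smul, Emap_zeta_eq_zero Q N hk hNk hN (Nat.pos_of_ne_zero hane) (mem_range.mp ha),
      smul_zero]

end RepackAux3



open Finset

/-- Correctness of the iterative ring-repacking algorithm (Algorithm 1 / Lemma 1):
starting from `c_j^{(0)} = N⁻¹ · m_j` and folding `log₂ N` times with the automorphisms
`φ_g`, the final element has the constant coefficients of the `m_i` as its coefficients. -/
theorem ring_repacking_correct (k N Q : ℕ)
    (hk : 1 ≤ k) (hN : N = 2 ^ k) (hQ0 : 0 < Q) (hQ : Odd Q)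
    (m : ℕ → Rq Q N) (c : ℕ → ℕ → Rq Q N)
    (hc0 : ∀ j < N, c 0 j = algebraMap (ZMod Q) (Rq Q N) ((N : ZMod Q)⁻¹) * m j)
    (hstep : ∀ i < k, ∀ j < N / 2 ^ (i + 1),
      c (i + 1) j =
        c i j + (root (X ^ N + 1 : (ZMod Q)[X])) ^ (N / 2 ^ (i + 1)) * c i (j + N / 2 ^ (i + 1)) +
          phi Q N (if i = 0 then 2 * N - 1 else 5 ^ 2 ^ (i - 1) % (2 * N))
            (odd_repack_exponent N i (hN ▸ Nat.two_pow_pos k))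
            (c i j - (root (X ^ N + 1 : (ZMod Q)[X])) ^ (N / 2 ^ (i + 1)) *
              c i (j + N / 2 ^ (i + 1)))) :
    c k 0 = ∑ i ∈ Finset.range N,
      algebraMap (ZMod Q) (Rq Q N) (coeffOf (hN ▸ Nat.two_pow_pos k) (m i) 0) *
        (root (X ^ N + 1 : (ZMod Q)[X])) ^ i := by
  rcases eq_or_ne Q 1 with rfl | hQ1
  · haveI : Subsingleton ((ZMod 1)[X]) :=
      ⟨fun p q => Polynomial.ext fun n => Subsingleton.elim _ _⟩
    haveI : Subsingleton (Rq 1 N) := AdjoinRoot.mk_surjective.subsingleton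
    exact Subsingleton.elim _ _
  haveI : NeZero Q := ⟨by omega⟩
  haveI : Fact (1 < Q) := ⟨by omega⟩
  have hNpos : 0 < N := hN ▸ Nat.two_pow_pos k
  have hQ2 : ¬ (2 ∣ Q) := by rw [Nat.odd_iff] at hQ; omega
  have hunit : IsUnit ((N : ZMod Q)) := by
    rw [hN]
    exact_mod_cast (ZMod.isUnit_iff_coprime (2 ^ k) Q).mpr
      (Nat.Coprime.pow_left k ((Nat.prime_two.coprime_iff_not_dvd).mpr hQ2))
  have key : ∀ i, i ≤ k → ∀ j, j < 2 ^ (k - i) →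
      c i j = algebraMap (ZMod Q) (Rq Q N) ((N : ZMod Q)⁻¹) *
        ∑ s ∈ Finset.range (2 ^ i),
          (root (X ^ N + 1 : (ZMod Q)[X])) ^ (2 ^ (k - i) * s) *
            Emap Q N (hN ▸ Nat.two_pow_pos k) i (m (j + 2 ^ (k - i) * s)) := by
    intro i
    induction i with
    | zero =>
      intro _ j hj
      have hjN : j < N := by rw [hN]; simpa using hj
      rw [hc0 j hjN]
      simp [Emap]
    | succ i ih =>
      intro hik j hj
      have hik' : i < k := by omega
      have h2t : (2:ℕ) ^ (k - i) = 2 * 2 ^ (k - i - 1) := by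
        rw [← pow_succ']; congr 1; omega
      have hkk : k - (i + 1) = k - i - 1 := by omega
      have ht : N / 2 ^ (i + 1) = 2 ^ (k - i - 1) := by
        rw [hN, Nat.pow_div (by omega) (by norm_num), hkk]
      have hj' : j < N / 2 ^ (i + 1) := by rw [ht, ← hkk]; exact hj
      have hjb1 : j < 2 ^ (k - i) := by rw [h2t]; rw [hkk] at hj; omega
      have hjb2 : j + 2 ^ (k - i - 1) < 2 ^ (k - i) := by rw [h2t]; rw [hkk] at hj; omega
      rw [hstep i hik' j hj', ht, ih (by omega) j hjb1, ih (by omega) _ hjb2, hkk]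
      have hexp1 : ∀ s : ℕ, 2 ^ (k - i - 1) * (2 * s) = 2 ^ (k - i) * s := by
        intro s; rw [h2t]; ring
      have hexp2 : ∀ s : ℕ, 2 ^ (k - i - 1) * (2 * s + 1) = 2 ^ (k - i - 1) + 2 ^ (k - i) * s := by
        intro s; rw [h2t]; ring
      have hidx2 : ∀ s : ℕ, j + (2 ^ (k - i - 1) + 2 ^ (k - i) * s)
          = j + 2 ^ (k - i - 1) + 2 ^ (k - i) * s := fun s => by omega
      -- normalize RHS
      rw [show (2:ℕ) ^ (i + 1) = 2 * 2 ^ i from by rw [← pow_succ']]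
      rw [sum_range_even_odd (fun s => (root (X ^ N + 1 : (ZMod Q)[X])) ^ (2 ^ (k - i - 1) * s) *
        Emap Q N (hN ▸ Nat.two_pow_pos k) (i + 1) (m (j + 2 ^ (k - i - 1) * s))) (2 ^ i)]
      have hR1 : ∀ s ∈ range (2 ^ i),
          (root (X ^ N + 1 : (ZMod Q)[X])) ^ (2 ^ (k - i - 1) * (2 * s)) *
            Emap Q N (hN ▸ Nat.two_pow_pos k) (i + 1) (m (j + 2 ^ (k - i - 1) * (2 * s)))
          = (root (X ^ N + 1 : (ZMod Q)[X])) ^ (2 ^ (k - i) * s) *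
              Emap Q N (hN ▸ Nat.two_pow_pos k) i (m (j + 2 ^ (k - i) * s)) +
            (root (X ^ N + 1 : (ZMod Q)[X])) ^ (2 ^ (k - i) * s) *
              phi Q N _ (odd_repack_exponent N i (hN ▸ Nat.two_pow_pos k))
                (Emap Q N (hN ▸ Nat.two_pow_pos k) i (m (j + 2 ^ (k - i) * s))) := by
        intro s _
        rw [hexp1 s, Emap_succ, mul_add]
      have hR2 : ∀ s ∈ range (2 ^ i),
          (root (X ^ N + 1 : (ZMod Q)[X])) ^ (2 ^ (k - i - 1) * (2 * s + 1)) *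
            Emap Q N (hN ▸ Nat.two_pow_pos k) (i + 1) (m (j + 2 ^ (k - i - 1) * (2 * s + 1)))
          = (root (X ^ N + 1 : (ZMod Q)[X])) ^ (2 ^ (k - i - 1) + 2 ^ (k - i) * s) *
              Emap Q N (hN ▸ Nat.two_pow_pos k) i (m (j + 2 ^ (k - i - 1) + 2 ^ (k - i) * s)) +
            (root (X ^ N + 1 : (ZMod Q)[X])) ^ (2 ^ (k - i - 1) + 2 ^ (k - i) * s) *
              phi Q N _ (odd_repack_exponent N i (hN ▸ Nat.two_pow_pos k))
                (Emap Q N (hN ▸ Nat.two_pow_pos k) i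
                  (m (j + 2 ^ (k - i - 1) + 2 ^ (k - i) * s))) := by
        intro s _
        rw [hexp2 s, hidx2 s, Emap_succ, mul_add]
      rw [Finset.sum_congr rfl hR1, Finset.sum_congr rfl hR2]
      -- normalize LHS
      have hφt : phi Q N _ (odd_repack_exponent N i (hN ▸ Nat.two_pow_pos k))
          ((root (X ^ N + 1 : (ZMod Q)[X])) ^ (2 ^ (k - i - 1)))
          = - (root (X ^ N + 1 : (ZMod Q)[X])) ^ (2 ^ (k - i - 1)) := by
        have := phi_g_zeta_odd Q N hN hk hik'
          (odd_repack_exponent N i (hN ▸ Nat.two_pow_pos k)) odd_one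
        rwa [mul_one] at this
      simp only [map_sub, map_mul, map_sum, AlgHom.commutes,
        phi_g_zeta_even Q N hN hk hik' (odd_repack_exponent N i (hN ▸ Nat.two_pow_pos k)), hφt]
      have hpush : ∀ (B : Rq Q N) (G : ℕ → Rq Q N),
          (root (X ^ N + 1 : (ZMod Q)[X])) ^ (2 ^ (k - i - 1)) *
            (B * ∑ s ∈ range (2 ^ i), (root (X ^ N + 1 : (ZMod Q)[X])) ^ (2 ^ (k - i) * s) * G s)
          = B * ∑ s ∈ range (2 ^ i),
              (root (X ^ N + 1 : (ZMod Q)[X])) ^ (2 ^ (k - i - 1) + 2 ^ (k - i) * s) * G s := by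
        intro B G
        rw [mul_left_comm, Finset.mul_sum]
        congr 1
        refine Finset.sum_congr rfl fun s _ => ?_
        rw [← mul_assoc, ← pow_add]
      rw [neg_mul]
      rw [hpush, hpush]
      rw [Finset.sum_add_distrib, Finset.sum_add_distrib]
      ring
  have hfin := key k le_rfl 0 (by norm_num)
  rw [hfin]
  simp only [Nat.sub_self, pow_zero, one_mul, zero_add]
  rw [Finset.mul_sum]
  rw [show Finset.range N = Finset.range (2 ^ k) from by rw [hN]]
  refine Finset.sum_congr rfl fun s hs => ?_
  rw [Emap_apply Q N hk hN (hN ▸ Nat.two_pow_pos k) (m s)]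
  calc algebraMap (ZMod Q) (Rq Q N) ((N : ZMod Q)⁻¹) *
        ((root (X ^ N + 1 : (ZMod Q)[X])) ^ s *
          algebraMap (ZMod Q) (Rq Q N) ((N : ZMod Q) * coeffOf (hN ▸ Nat.two_pow_pos k) (m s) 0))
      = (algebraMap (ZMod Q) (Rq Q N) ((N : ZMod Q)⁻¹) *
          algebraMap (ZMod Q) (Rq Q N) ((N : ZMod Q) * coeffOf (hN ▸ Nat.two_pow_pos k) (m s) 0)) *
        (root (X ^ N + 1 : (ZMod Q)[X])) ^ s := by ring
    _ = algebraMap (ZMod Q) (Rq Q N) (coeffOf (hN ▸ Nat.two_pow_pos k) (m s) 0) *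
        (root (X ^ N + 1 : (ZMod Q)[X])) ^ s := by
        rw [← map_mul, ← mul_assoc, ZMod.inv_mul_of_unit _ hunit, one_mul]
end

section
/- Let N ≥ 2 be a power of two, Q a positive integer, and R = (ZMod Q)[X]/(X^N + 1). For every m ∈ R, the element m + φ_{2N−1}(m) has constant coefficient 2·m[0] and, for each 1 ≤ k ≤ N − 1, k-th coefficient equal to m[k] − m[N−k]. (Here φ_{2N−1} is the automorphism X ↦ X^{2N−1} = X^{−1}.) -/
open Polynomial AdjoinRoot

open Finset in
lemma fold_aux (N Q : ℕ) (hN2 : 2 ≤ N) (hNpos : 0 < N)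
    (hg : Odd (2 * N - 1)) (m : Rq Q N) :
    coeffOf hNpos (m + phi Q N (2 * N - 1) hg m) 0 = 2 * coeffOf hNpos m 0 ∧
    ∀ j, 1 ≤ j → j ≤ N - 1 →
      coeffOf hNpos (m + phi Q N (2 * N - 1) hg m) j =
        coeffOf hNpos m j - coeffOf hNpos m (N - j) := by
  rcases subsingleton_or_nontrivial (ZMod Q) with hs | hs
  · exact ⟨Subsingleton.elim _ _, fun _ _ _ => Subsingleton.elim _ _⟩
  classical
  set f : (ZMod Q)[X] := X ^ N + 1 with hfdef
  have hmon : f.Monic := monicXN Q N hNpos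
  have hdegf : f.degree = (N : ℕ) := by
    simpa [hfdef] using Polynomial.degree_X_pow_add_C (R := ZMod Q) hNpos (a := 1)
  obtain ⟨p0, rfl⟩ := AdjoinRoot.mk_surjective m
  set p : (ZMod Q)[X] := p0 %ₘ f with hpdef
  have hdegp : p.degree < f.degree := Polynomial.degree_modByMonic_lt p0 hmon
  have hndp : p.natDegree < N := by
    rcases eq_or_ne p 0 with h | h
    · simpa [h] using hNpos
    · have := Polynomial.degree_eq_natDegree h ▸ (hdegf ▸ hdegp)
      exact_mod_cast this
  have hmkp : AdjoinRoot.mk f p = AdjoinRoot.mk f p0 := by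
    conv_rhs => rw [← Polynomial.modByMonic_add_div p0 f]
    simp [AdjoinRoot.mk_self, hpdef]
  -- coefficient function of the representative
  set c : ℕ → ZMod Q := fun j => if j = 0 then 2 * p.coeff 0
    else p.coeff j - p.coeff (N - j) with hcdef
  set q : (ZMod Q)[X] := ∑ j ∈ Finset.range N, Polynomial.monomial j (c j) with hqdef
  have hqcoeff : ∀ j, q.coeff j = if j < N then c j else 0 := by
    intro j
    rw [hqdef, Polynomial.finset_sum_coeff]
    simp only [Polynomial.coeff_monomial]
    rw [Finset.sum_ite_eq' (Finset.range N) j c]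
    simp [Finset.mem_range]
  have hdegq : q.degree < f.degree := by
    rw [hdegf]
    rw [Polynomial.degree_lt_iff_coeff_zero]
    intro j hj
    rw [hqcoeff]
    simp only [ite_eq_right_iff]
    intro h
    exfalso; exact absurd h (by exact_mod_cast Nat.not_lt.2 (by exact_mod_cast hj))
  set r := AdjoinRoot.root f with hrdef
  have hrN : r ^ N = -1 := root_pow_eq_neg_one Q N
  have hr2N : r ^ (2 * N) = 1 := by
    rw [mul_comm, pow_mul, hrN]; ring
  have hkey : ∀ i, 0 < i → i ≤ N → r ^ ((2 * N - 1) * i) = -(r ^ (N - i)) := by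
    intro i hi hiN
    obtain ⟨d, rfl⟩ : ∃ d, i = 1 + d := ⟨i - 1, by omega⟩
    obtain ⟨a, rfl⟩ : ∃ a, N = 1 + d + a := ⟨N - (1 + d), by omega⟩
    have h1 : (2 * (1 + d + a) - 1) * (1 + d)
        = 2 * (1 + d + a) * d + ((1 + d + a) + ((1 + d + a) - (1 + d))) := by
      have e1 : 2 * (1 + d + a) - 1 = 1 + 2 * d + 2 * a := by omega
      have e2 : (1 + d + a) - (1 + d) = a := by omega
      rw [e1, e2]; ring
    rw [h1, pow_add, pow_mul, hr2N, one_pow, one_mul, pow_add, hrN, neg_one_mul]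
  -- the main algebraic identity
  have main : AdjoinRoot.mk f q = AdjoinRoot.mk f p0 + phi Q N (2 * N - 1) hg (AdjoinRoot.mk f p0) := by
    have hphi : ∀ x, phi Q N (2 * N - 1) hg (AdjoinRoot.mk f x) = Polynomial.aeval (r ^ (2 * N - 1)) x :=
      fun x => rfl
    rw [← hmkp, hphi, ← AdjoinRoot.aeval_eq, ← AdjoinRoot.aeval_eq]
    conv_rhs => rw [Polynomial.as_sum_range' p N hndp]
    rw [hqdef]
    rw [map_sum, map_sum, map_sum]
    simp only [Polynomial.aeval_monomial, ← pow_mul, Nat.mul_zero, pow_zero, mul_one]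
    rw [Finset.range_eq_Ico, Finset.sum_eq_sum_Ico_succ_bot hNpos,
        Finset.sum_eq_sum_Ico_succ_bot hNpos, Finset.sum_eq_sum_Ico_succ_bot hNpos]
    have h3 : ∑ i ∈ Finset.Ico 1 N, algebraMap (ZMod Q) (Rq Q N) (p.coeff i) * r ^ ((2*N-1) * i)
        = ∑ j ∈ Finset.Ico 1 N, -(algebraMap (ZMod Q) (Rq Q N) (p.coeff (N - j)) * r ^ j) := by
      refine Finset.sum_nbij' (fun i => N - i) (fun j => N - j) ?_ ?_ ?_ ?_ ?_
      · intro a ha; simp only [Finset.mem_Ico] at *; omega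
      · intro a ha; simp only [Finset.mem_Ico] at *; omega
      · intro a ha; simp only [Finset.mem_Ico] at ha; show N - (N - a) = a; omega
      · intro a ha; simp only [Finset.mem_Ico] at ha; show N - (N - a) = a; omega
      · intro i hi
        simp only [Finset.mem_Ico] at hi
        rw [hkey i hi.1 (le_of_lt hi.2)]
        have : N - (N - i) = i := by omega
        rw [this]
        ring
    rw [h3]
    have h1 : ∑ j ∈ Finset.Ico 1 N, algebraMap (ZMod Q) (Rq Q N) (c j) * r ^ j
        = ∑ j ∈ Finset.Ico 1 N, (algebraMap (ZMod Q) (Rq Q N) (p.coeff j) * r ^ j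
            + -(algebraMap (ZMod Q) (Rq Q N) (p.coeff (N - j)) * r ^ j)) := by
      refine Finset.sum_congr rfl fun j hj => ?_
      simp only [Finset.mem_Ico] at hj
      have : c j = p.coeff j - p.coeff (N - j) := by
        rw [hcdef]; simp only [if_neg (by omega : ¬ j = 0)]
      rw [this, map_sub]
      ring
    rw [h1, Finset.sum_add_distrib]
    have hc0 : c 0 = 2 * p.coeff 0 := rfl
    rw [hc0, map_mul, map_ofNat]
    ring
  constructor
  · have := congrArg (fun x => coeffOf hNpos x 0) main
    rw [← this]
    unfold coeffOf
    rw [AdjoinRoot.modByMonicHom_mk, AdjoinRoot.modByMonicHom_mk,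
        (Polynomial.modByMonic_eq_self_iff hmon).2 hdegq, hqcoeff]
    simp only [if_pos hNpos]
    rw [hcdef]
    simp [hpdef, hfdef]
  · intro j hj1 hj2
    have := congrArg (fun x => coeffOf hNpos x j) main
    rw [← this]
    unfold coeffOf
    rw [AdjoinRoot.modByMonicHom_mk, AdjoinRoot.modByMonicHom_mk,
        (Polynomial.modByMonic_eq_self_iff hmon).2 hdegq, hqcoeff]
    rw [if_pos (by omega : j < N), hcdef]
    simp only [if_neg (by omega : ¬ j = 0)]
    rfl

/-- The first folding step (`i = 0`, `g = 2N − 1`) of the ring-repacking algorithm: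
`m + φ_{2N−1}(m)` has constant coefficient `2·m[0]` and `k`-th coefficient
`m[k] − m[N−k]` for `1 ≤ k ≤ N − 1`. -/
theorem first_folding_step (k N Q : ℕ) (hk : 1 ≤ k) (hN : N = 2 ^ k) (hQ : 0 < Q)
    (m : Rq Q N) :
    coeffOf (hN ▸ Nat.two_pow_pos k)
        (m + phi Q N (2 * N - 1) ⟨N - 1, by have := hN ▸ Nat.two_pow_pos k; omega⟩ m) 0 =
      2 * coeffOf (hN ▸ Nat.two_pow_pos k) m 0 ∧
    ∀ j, 1 ≤ j → j ≤ N - 1 →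
      coeffOf (hN ▸ Nat.two_pow_pos k)
          (m + phi Q N (2 * N - 1) ⟨N - 1, by have := hN ▸ Nat.two_pow_pos k; omega⟩ m) j =
        coeffOf (hN ▸ Nat.two_pow_pos k) m j - coeffOf (hN ▸ Nat.two_pow_pos k) m (N - j) := by
  have hN2 : 2 ≤ N := by
    rw [hN]
    calc 2 = 2 ^ 1 := rfl
    _ ≤ 2 ^ k := Nat.pow_le_pow_right (by norm_num) hk
  exact fold_aux N Q hN2 _ _ m
end

section
/- Let N be a power of two, Q a positive integer, R_N = (ZMod Q)[X]/(X^N + 1), and let k be a power of two dividing N. Then every element m of R_N can be written uniquely as m = Σ_{i=0}^{k−1} X^i · m_i(X^k), where each m_i is (the image under X ↦ X^k of) an element of R_{N/k} = (ZMod Q)[X]/(X^{N/k} + 1); equivalently, R_N is a free module of rank k over the subring ι(R_{N/k}), with basis 1, X, …, X^{k−1}, where ι is the embedding X ↦ X^k. -/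
open Polynomial AdjoinRoot

lemma my_sum_range_mul {A : Type*} [AddCommMonoid A] (k M : ℕ) (f : ℕ → A) :
    ∑ n ∈ Finset.range (M * k), f n
      = ∑ i ∈ Finset.range k, ∑ j ∈ Finset.range M, f (i + k * j) := by
  rw [← Fin.sum_univ_eq_sum_range (fun n => f n) (M * k),
      ← Equiv.sum_comp (finProdFinEquiv (m := M) (n := k)) (fun x : Fin (M * k) => f x)]
  rw [Fintype.sum_prod_type, Finset.sum_comm]
  simp only [finProdFinEquiv, Equiv.coe_fn_mk]
  rw [← Fin.sum_univ_eq_sum_range (fun i => ∑ j ∈ Finset.range M, f (i + k * j)) k]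
  congr 1; funext i
  rw [← Fin.sum_univ_eq_sum_range (fun j => f (i + k * j)) M]

/-- For `k | N` powers of two, `R_N = (ZMod Q)[X]/(X^N+1)` is free of rank `k` over the
image of `R_{N/k}` under the embedding `ι : X ↦ X^k`, with basis `1, X, …, X^{k−1}`:
every `m ∈ R_N` decomposes uniquely as `m = Σ_{i<k} X^i · ι(m_i)`. -/
theorem unique_decomposition_over_subring (N k Q : ℕ)
    (hNpow : ∃ a, N = 2 ^ a) (hkpow : ∃ b, k = 2 ^ b) (hdvd : k ∣ N) (hQ : 0 < Q) :
    ∃ ι : Rq Q (N / k) →+* Rq Q N,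
      ι (root (X ^ (N / k) + 1 : (ZMod Q)[X])) = (root (X ^ N + 1 : (ZMod Q)[X])) ^ k ∧
      ∀ m : Rq Q N, ∃! v : Fin k → Rq Q (N / k),
        m = ∑ i : Fin k, (root (X ^ N + 1 : (ZMod Q)[X])) ^ (i : ℕ) * ι (v i) := by
  have hN : 0 < N := by obtain ⟨a, ha⟩ := hNpow; exact ha ▸ Nat.pow_pos (n := a) two_pos
  have hk : 0 < k := by obtain ⟨b, hb⟩ := hkpow; exact hb ▸ Nat.pow_pos (n := b) two_pos
  set M := N / k with hMdef
  have hkM : k * M = N := Nat.mul_div_cancel' hdvd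
  have hM : 0 < M := Nat.div_pos (Nat.le_of_dvd hN hdvd) hk
  set r : Rq Q N := root (X ^ N + 1 : (ZMod Q)[X]) with hr
  have hroot : (Polynomial.aeval (r ^ k)) (X ^ M + 1 : (ZMod Q)[X]) = 0 := by
    rw [map_add, map_pow, Polynomial.aeval_X, map_one, ← pow_mul, hkM,
      root_pow_eq_neg_one]
    ring
  set ι : Rq Q M →+* Rq Q N := (AdjoinRoot.liftAlgHom _ (Algebra.ofId _ _) (r ^ k) hroot).toRingHom with hι
  refine ⟨ι, ?_, ?_⟩
  · show (AdjoinRoot.liftAlgHom (X ^ M + 1) (Algebra.ofId _ _) (r ^ k) hroot) (root (X ^ M + 1)) = r ^ k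
    exact AdjoinRoot.liftAlgHom_root _ _ _ hroot
  -- the decomposition map
  set F : (Fin k → Rq Q M) → Rq Q N := fun v => ∑ i : Fin k, r ^ (i : ℕ) * ι (v i) with hF
  suffices hbij : Function.Bijective F by
    intro m
    obtain ⟨v, hv⟩ := hbij.2 m
    exact ⟨v, hv.symm, fun w hw => hbij.1 (hw.symm.trans hv.symm)⟩
  -- degenerate case Q = 1
  rcases eq_or_lt_of_le (show 1 ≤ Q from hQ) with h1 | h1
  · haveI : Subsingleton (ZMod Q) := by
      rw [← h1]; infer_instance
    haveI : Subsingleton ((ZMod Q)[X]) := inferInstance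
    haveI : Subsingleton (Rq Q N) := (AdjoinRoot.mk_surjective).subsingleton
    haveI : Subsingleton (Rq Q M) := (AdjoinRoot.mk_surjective).subsingleton
    exact ⟨fun a b _ => Subsingleton.elim a b, fun m => ⟨fun _ => 0, Subsingleton.elim _ _⟩⟩
  -- main case
  haveI : NeZero Q := ⟨hQ.ne'⟩
  haveI : Fact (1 < Q) := ⟨h1⟩
  haveI : Nontrivial (ZMod Q) := ZMod.nontrivial Q
  -- surjectivity
  have hdegN : ((X : (ZMod Q)[X]) ^ N + 1).degree = (N : ℕ) := by
    rw [← Polynomial.C_1, Polynomial.degree_X_pow_add_C hN]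
  have hsurj : Function.Surjective F := by
    intro m
    obtain ⟨q, rfl⟩ := AdjoinRoot.mk_surjective m
    set p : (ZMod Q)[X] := q %ₘ (X ^ N + 1) with hp
    have hmk : AdjoinRoot.mk _ p = AdjoinRoot.mk (X ^ N + 1 : (ZMod Q)[X]) q := by
      rw [hp, AdjoinRoot.mk_eq_mk, Polynomial.modByMonic_eq_sub_mul_div _ (X ^ N + 1 : (ZMod Q)[X]),
        sub_sub_cancel_left]
      exact dvd_neg.mpr (dvd_mul_right _ _)
    have hdeg : p.natDegree < N := by
      by_cases hp0 : p = 0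
      · rw [hp0]; simpa using hN
      · have := Polynomial.degree_modByMonic_lt q (monicXN Q N hN)
        rw [← hp, hdegN] at this
        exact (Polynomial.natDegree_lt_iff_degree_lt hp0).mpr this
    refine ⟨fun i => AdjoinRoot.mk _
      (∑ j ∈ Finset.range M, Polynomial.C (p.coeff ((i : ℕ) + k * j)) * X ^ j), ?_⟩
    have key : ∀ i : Fin k,
        ι (AdjoinRoot.mk _ (∑ j ∈ Finset.range M, Polynomial.C (p.coeff ((i : ℕ) + k * j)) * X ^ j))
          = ∑ j ∈ Finset.range M, algebraMap (ZMod Q) (Rq Q N) (p.coeff ((i : ℕ) + k * j)) * r ^ (k * j) := by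
      intro i
      rw [hι]
      simp only [AlgHom.toRingHom_eq_coe, RingHom.coe_coe, AdjoinRoot.liftAlgHom_mk]
      change Polynomial.aeval (r ^ k) _ = _
      rw [map_sum]
      congr 1; funext j
      rw [map_mul, Polynomial.aeval_C, map_pow, Polynomial.aeval_X, ← pow_mul]
    rw [hF]
    simp only [key]
    have expand : ∀ i : Fin k, r ^ (i : ℕ) *
        (∑ j ∈ Finset.range M, algebraMap (ZMod Q) (Rq Q N) (p.coeff ((i : ℕ) + k * j)) * r ^ (k * j))
        = ∑ j ∈ Finset.range M, p.coeff ((i : ℕ) + k * j) • r ^ ((i : ℕ) + k * j) := by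
      intro i
      rw [Finset.mul_sum]
      congr 1; funext j
      rw [Algebra.smul_def, pow_add]
      ring
    simp only [expand]
    rw [← hmk, ← AdjoinRoot.aeval_eq, hr,
      Polynomial.aeval_eq_sum_range' (show p.natDegree < M * k by rw [mul_comm]; exact lt_of_lt_of_le hdeg (le_of_eq hkM.symm)),
      my_sum_range_mul k M (fun n => p.coeff n • (root (X ^ N + 1 : (ZMod Q)[X])) ^ n),
      Fin.sum_univ_eq_sum_range (fun i => ∑ j ∈ Finset.range M,
        p.coeff (i + k * j) • (root (X ^ N + 1 : (ZMod Q)[X])) ^ (i + k * j)) k]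
  -- cardinalities
  haveI fN : Fintype (Rq Q N) :=
    Module.fintypeOfFintype (AdjoinRoot.powerBasis' (monicXN Q N hN)).basis
  haveI fM : Fintype (Rq Q M) :=
    Module.fintypeOfFintype (AdjoinRoot.powerBasis' (monicXN Q M hM)).basis
  have natdeg : ∀ n : ℕ, ((X : (ZMod Q)[X]) ^ n + 1).natDegree = n := by
    intro n
    rw [← Polynomial.C_1, Polynomial.natDegree_X_pow_add_C]
  have cardN : Fintype.card (Rq Q N) = Q ^ N := by
    rw [Module.card_fintype (AdjoinRoot.powerBasis' (monicXN Q N hN)).basis, ZMod.card,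
      Fintype.card_fin, AdjoinRoot.powerBasis'_dim, natdeg]
  have cardM : Fintype.card (Rq Q M) = Q ^ M := by
    rw [Module.card_fintype (AdjoinRoot.powerBasis' (monicXN Q M hM)).basis, ZMod.card,
      Fintype.card_fin, AdjoinRoot.powerBasis'_dim, natdeg]
  have hcard : Fintype.card (Fin k → Rq Q M) = Fintype.card (Rq Q N) := by
    rw [Fintype.card_fun, cardM, cardN, Fintype.card_fin, ← pow_mul, mul_comm M k, hkM]
  exact (Fintype.bijective_iff_surjective_and_card F).mpr ⟨hsurj, hcard⟩
end

section
/- Let N be a power of two, Q a positive integer, and R = (ZMod Q)[X]/(X^N + 1). Given a function f : Fin N → ZMod Q, define u_f ∈ R by u_f = f(0) − Σ_{i=1}^{N−1} f(N−i)·X^i. Then for every integer k with 0 ≤ k ≤ N − 1, the constant coefficient of X^k · u_f (i.e., the degree-0 coefficient of its unique representative of degree < N) equals f(k). -/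
open Polynomial AdjoinRoot

/-- Correctness of the large-domain private function evaluation: encoding the input
`k` in the exponent as `X^k` and multiplying by the test vector
`u_f = f(0) − Σ_{i=1}^{N−1} f(N−i)·X^i` puts `f(k)` in the constant coefficient. -/
theorem test_vector_constant_coeff (c N Q : ℕ) (hN : N = 2 ^ c) (hQ : 0 < Q) [NeZero N]
    (f : Fin N → ZMod Q) (u : Rq Q N)
    (hu : u = algebraMap (ZMod Q) (Rq Q N) (f 0) -
      ∑ i ∈ Finset.Ico 1 N,
        algebraMap (ZMod Q) (Rq Q N) (f (Fin.ofNat N (N - i : ℕ))) *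
          (root (X ^ N + 1 : (ZMod Q)[X])) ^ i)
    (k : Fin N) :
    coeffOf (hN ▸ Nat.two_pow_pos c)
        ((root (X ^ N + 1 : (ZMod Q)[X])) ^ (k : ℕ) * u) 0 = f k := by
  rcases subsingleton_or_nontrivial (ZMod Q) with hT | hT
  · exact Subsingleton.elim _ _
  have hN0 : 0 < N := hN ▸ Nat.two_pow_pos c
  set r : Rq Q N := root (X ^ N + 1 : (ZMod Q)[X]) with hrdef
  have hr : r ^ N = -1 := root_pow_eq_neg_one Q N
  set kk := (k : ℕ) with hkk
  have hk : kk < N := k.isLt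
  clear_value kk
  set cf : ℕ → ZMod Q := fun j =>
    if j ≤ kk then f (Fin.ofNat N (kk - j : ℕ)) else -f (Fin.ofNat N (N + kk - j : ℕ)) with hcf
  set p : (ZMod Q)[X] := ∑ j : Fin N, C (cf (j : ℕ)) * X ^ (j : ℕ) with hp
  have hdeg : p.degree < (X ^ N + 1 : (ZMod Q)[X]).degree := by
    rw [show (1 : (ZMod Q)[X]) = C 1 by simp, Polynomial.degree_X_pow_add_C hN0]
    exact Polynomial.degree_sum_fin_lt _
  have hmk : AdjoinRoot.mk (X ^ N + 1 : (ZMod Q)[X]) p = r ^ kk * u := by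
    rw [hu, hp]
    simp only [map_sum, map_mul, map_pow, AdjoinRoot.mk_X, AdjoinRoot.mk_C,
      ← AdjoinRoot.algebraMap_eq, ← hrdef]
    rw [mul_sub, Finset.mul_sum]
    rw [Fin.sum_univ_eq_sum_range (fun j => algebraMap (ZMod Q) (Rq Q N) (cf j) * r ^ j) N]
    rw [Finset.range_eq_Ico, ← Finset.sum_Ico_consecutive _ (Nat.zero_le (kk+1)) hk]
    rw [← Finset.sum_Ico_consecutive (fun i => r ^ kk * (algebraMap (ZMod Q) (Rq Q N) (f (Fin.ofNat N (N - i : ℕ))) * r ^ i))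
      (show 1 ≤ N - kk by omega) (Nat.sub_le N kk)]
    have e1 : ∑ j ∈ Finset.Ico (kk+1) N, algebraMap (ZMod Q) (Rq Q N) (cf j) * r ^ j
        = ∑ i ∈ Finset.Ico 1 (N - kk),
            -(r ^ kk * (algebraMap (ZMod Q) (Rq Q N) (f (Fin.ofNat N (N - i : ℕ))) * r ^ i)) := by
      refine Finset.sum_nbij' (fun j => j - kk) (fun i => i + kk) ?_ ?_ ?_ ?_ ?_
      · intro a ha; simp only [Finset.mem_Ico] at *; (try dsimp only); omega
      · intro a ha; simp only [Finset.mem_Ico] at *; (try dsimp only); omega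
      · intro a ha; simp only [Finset.mem_Ico] at ha; (try dsimp only); omega
      · intro a ha; simp only [Finset.mem_Ico] at ha; (try dsimp only); omega
      · intro a ha
        simp only [Finset.mem_Ico] at ha
        rw [hcf]
        dsimp only
        rw [if_neg (by omega : ¬ a ≤ kk), map_neg,
          show N - (a - kk) = N + kk - a by omega]
        have hpow : r ^ kk * r ^ (a - kk) = r ^ a := by
          rw [← pow_add]; congr 1; omega
        rw [← hpow]; ring
    have e2 : ∑ j ∈ Finset.Ico 0 (kk+1), algebraMap (ZMod Q) (Rq Q N) (cf j) * r ^ j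
        = r ^ kk * algebraMap (ZMod Q) (Rq Q N) (f 0)
          - ∑ i ∈ Finset.Ico (N - kk) N,
              r ^ kk * (algebraMap (ZMod Q) (Rq Q N) (f (Fin.ofNat N (N - i : ℕ))) * r ^ i) := by
      have e3 : ∑ i ∈ Finset.Ico (N - kk) N,
            r ^ kk * (algebraMap (ZMod Q) (Rq Q N) (f (Fin.ofNat N (N - i : ℕ))) * r ^ i)
          = ∑ j ∈ Finset.Ico 0 kk,
              -(algebraMap (ZMod Q) (Rq Q N) (cf j) * r ^ j) := by
        refine Finset.sum_nbij' (fun i => kk + i - N) (fun j => N + j - kk) ?_ ?_ ?_ ?_ ?_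
        · intro a ha; simp only [Finset.mem_Ico] at *; (try dsimp only); omega
        · intro a ha; simp only [Finset.mem_Ico] at *; (try dsimp only); omega
        · intro a ha; simp only [Finset.mem_Ico] at ha; (try dsimp only); omega
        · intro a ha; simp only [Finset.mem_Ico] at ha; (try dsimp only); omega
        · intro a ha
          simp only [Finset.mem_Ico] at ha
          rw [hcf]
          dsimp only
          have hle : kk + a - N ≤ kk := by omega
          have heq2 : kk - (kk + a - N) = N - a := by omega
          rw [if_pos hle, heq2]
          have hpow : r ^ kk * r ^ a = r ^ (kk + a - N) * (-1) := by
            rw [← hr, ← pow_add, ← pow_add]; congr 1; omega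
          calc r ^ kk * (algebraMap (ZMod Q) (Rq Q N) (f (Fin.ofNat N (N - a : ℕ))) * r ^ a)
              = algebraMap (ZMod Q) (Rq Q N) (f (Fin.ofNat N (N - a : ℕ))) * (r ^ kk * r ^ a) := by ring
            _ = _ := by rw [hpow]; ring
      rw [e3]
      rw [show Finset.Ico 0 (kk+1) = insert kk (Finset.Ico 0 kk) by
        simp [← Finset.range_eq_Ico, Finset.range_add_one]]
      rw [Finset.sum_insert (by simp)]
      rw [hcf]
      simp only [le_refl, if_true, Nat.sub_self, Fin.ofNat_zero, Finset.sum_neg_distrib]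
      ring
    rw [e1, e2, Finset.sum_neg_distrib]
    ring
  rw [← hmk]
  unfold coeffOf
  rw [AdjoinRoot.modByMonicHom_mk,
    (Polynomial.modByMonic_eq_self_iff (monicXN Q N hN0)).2 hdeg]
  rw [hp]
  rw [Polynomial.finset_sum_coeff]
  simp only [Polynomial.coeff_C_mul, Polynomial.coeff_X_pow]
  rw [Finset.sum_eq_single (⟨0, hN0⟩ : Fin N)]
  · simp only [hcf, if_true, Nat.zero_le, Nat.sub_zero, if_pos]
    simp only [Fin.val_mk, Nat.sub_zero, Nat.zero_le, if_true, mul_one, if_pos rfl]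
    rw [hkk]; exact congrArg f (Fin.ofNat_val_eq_self k)
  · intro b _ hb
    have : (b : ℕ) ≠ 0 := fun h => hb (Fin.ext h)
    simp [this.symm]
  · simp
end

section
/- Let N be a power of two and let a < b be real numbers. Let f : ℝ → ℝ and define u_f ∈ ℝ[X]/(X^N + 1) by u_f = f(a) − Σ_{i=1}^{N−1} f(a + ((N−i)/N)·(b−a))·X^i. Then for every integer k with 0 ≤ k ≤ N − 1, the constant coefficient of X^k · u_f equals f(a + (k/N)·(b−a)). -/
open Polynomial AdjoinRoot

noncomputable section

/-- The real negacyclic ring `ℝ[X]/(X^N + 1)`. -/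
abbrev Rr (N : ℕ) := AdjoinRoot (X ^ N + 1 : ℝ[X])

lemma monicXNR (N : ℕ) (hN : 0 < N) : (X ^ N + 1 : ℝ[X]).Monic :=
  Polynomial.monic_X_pow_add (lt_of_le_of_lt Polynomial.degree_one_le (by exact_mod_cast hN))

/-- The `k`-th coefficient of the unique degree `< N` representative of `m`. -/
def coeffOfR {N : ℕ} (hN : 0 < N) (m : Rr N) (k : ℕ) : ℝ :=
  ((AdjoinRoot.modByMonicHom (monicXNR N hN)) m).coeff k

lemma keyT (N j : ℕ) (hN : 0 < N) (hj : j < 2*N) :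
    (((X:ℝ[X])^j %ₘ (X^N+1)).coeff 0) = if j = 0 then 1 else if j = N then -1 else 0 := by
  have hmon : (X ^ N + 1 : ℝ[X]).Monic := monicXNR N hN
  have hdeg : ((X:ℝ[X])^N + 1).degree = N := by
    rw [Polynomial.degree_add_eq_left_of_degree_lt, degree_X_pow]
    rw [degree_X_pow]
    exact lt_of_le_of_lt Polynomial.degree_one_le (by exact_mod_cast hN)
  rcases lt_or_ge j N with h | h
  · have : ((X:ℝ[X])^j) %ₘ (X^N+1) = X^j := by
      rw [Polynomial.modByMonic_eq_self_iff hmon, hdeg, degree_X_pow]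
      exact_mod_cast h
    rw [this, coeff_X_pow]
    have : j ≠ N := h.ne
    rcases Nat.eq_zero_or_pos j with rfl | hj0
    · simp
    · simp [hj0.ne', hj0.ne, this]
  · have hsub : j - N < N := by omega
    have : ((X:ℝ[X])^j) %ₘ (X^N+1) = -X^(j-N) := by
      refine (Polynomial.div_modByMonic_unique (X^(j-N)) _ hmon ⟨?_, ?_⟩).2
      · rw [add_mul, ← pow_add, one_mul]
        rw [Nat.add_sub_cancel' h]
        ring
      · rw [hdeg, degree_neg, degree_X_pow]
        exact_mod_cast hsub
    rw [this, coeff_neg, coeff_X_pow]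
    have h0 : j ≠ 0 := by omega
    by_cases hN' : j = N
    · simp [h0, hN', hN.ne']
    · have : j - N ≠ 0 := by omega
      simp [h0, hN', this, Ne.symm this]

lemma rootpow_modByMonic {N : ℕ} (hN : 0 < N) (j : ℕ) :
    (AdjoinRoot.modByMonicHom (monicXNR N hN)) ((root (X ^ N + 1 : ℝ[X])) ^ j)
      = (X:ℝ[X])^j %ₘ (X^N+1) := by
  rw [← AdjoinRoot.mk_X, ← map_pow, AdjoinRoot.modByMonicHom_mk]

/-- Correctness of the test-vector encoding of a real scoring function `f : [a,b) → ℝ`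
with discretization factor `1/N`: multiplying `u_f` by `X^k` puts
`f(a + (k/N)(b−a)) = f(g⁻¹(k/N))` in the constant coefficient. -/
theorem real_test_vector_constant_coeff (c N : ℕ) (hN : N = 2 ^ c) (a b : ℝ) (hab : a < b)
    (f : ℝ → ℝ) (u : Rr N)
    (hu : u = algebraMap ℝ (Rr N) (f a) -
      ∑ i ∈ Finset.Ico 1 N,
        algebraMap ℝ (Rr N) (f (a + (((N - i : ℕ) : ℝ) / (N : ℝ)) * (b - a))) *
          (root (X ^ N + 1 : ℝ[X])) ^ i)
    (k : ℕ) (hk : k ≤ N - 1) :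
    coeffOfR (hN ▸ Nat.two_pow_pos c) ((root (X ^ N + 1 : ℝ[X])) ^ k * u) 0 =
      f (a + ((k : ℝ) / (N : ℝ)) * (b - a)) := by
  have hN0 : 0 < N := hN ▸ Nat.two_pow_pos c
  have hkN : k < N := by omega
  set ρ := root (X ^ N + 1 : ℝ[X]) with hρ
  have hm : ρ ^ k * u =
      (f a) • ρ ^ k -
      ∑ i ∈ Finset.Ico 1 N,
        (f (a + (((N - i : ℕ) : ℝ) / (N : ℝ)) * (b - a))) • ρ ^ (k + i) := by
    rw [hu, mul_sub, Finset.mul_sum]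
    congr 1
    · rw [Algebra.smul_def]; ring
    · refine Finset.sum_congr rfl fun i _ => ?_
      rw [Algebra.smul_def, pow_add]; ring
  unfold coeffOfR
  rw [hm, map_sub, map_smul, map_sum]
  rw [coeff_sub, coeff_smul, finset_sum_coeff]
  simp only [map_smul, coeff_smul, hρ, rootpow_modByMonic hN0]
  have Tk : (((X:ℝ[X])^k %ₘ (X^N+1)).coeff 0) = if k = 0 then 1 else 0 := by
    rw [keyT N k hN0 (by omega)]
    simp [hkN.ne]
  rcases Nat.eq_zero_or_pos k with rfl | hk1
  · rw [Tk]
    have : ∀ i ∈ Finset.Ico 1 N,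
        (f (a + (((N - i : ℕ) : ℝ) / (N : ℝ)) * (b - a))) •
          (((X:ℝ[X])^(0 + i) %ₘ (X^N+1)).coeff 0) = 0 := by
      intro i hi
      simp only [Finset.mem_Ico] at hi
      rw [keyT N (0 + i) hN0 (by omega)]
      have h1 : i ≠ 0 := by omega
      have h2 : i ≠ N := by omega
      simp [h1, h2]
    rw [Finset.sum_eq_zero this]
    simp
  · rw [Tk, if_neg hk1.ne']
    have hs : ∑ i ∈ Finset.Ico 1 N,
        (f (a + (((N - i : ℕ) : ℝ) / (N : ℝ)) * (b - a))) •
          (((X:ℝ[X])^(k + i) %ₘ (X^N+1)).coeff 0)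
        = -f (a + ((k : ℝ) / (N : ℝ)) * (b - a)) := by
      rw [Finset.sum_eq_single (N - k)]
      · rw [keyT N (k + (N - k)) hN0 (by omega)]
        have h1 : k + (N - k) ≠ 0 := by omega
        have h2 : k + (N - k) = N := by omega
        have h3 : N - (N - k) = k := by omega
        simp [h1, h2, h3, hN0.ne']
      · intro i hi hne
        simp only [Finset.mem_Ico] at hi
        rw [keyT N (k + i) hN0 (by omega)]
        have h1 : k + i ≠ 0 := by omega
        have h2 : k + i ≠ N := by omega
        simp [h1, h2, hk1.ne']
      · intro h
        exfalso
        exact h (Finset.mem_Ico.mpr ⟨by omega, by omega⟩)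
    rw [hs]
    simp
end
end
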